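/- Let X be a Banach space, p ∈ ℕ≥1 ∪ {∞}, and C ≥ 1. Assume that every 1-Lipschitz function g : X → [0, 10] admits a C^p smooth, C-Lipschitz function φ : X → ℝ with |g(x) − φ(x)| ≤ 1/8 for all x ∈ X. Then there exists a constant C₀ ≥ 1 such that every 1-Lipschitz function g : X → [0, 10] admits a C^p smooth, C₀-Lipschitz function h : X → [0, 10] with |g(x) − h(x)| ≤ 1/2 for all x ∈ X, h(x) = 0 whenever g(x) = 0, and h(x) = 10 whenever g(x) = 10. -/

import Mathlib

open Real

/-- Smooth correction function: `0` for `t ≤ 1/8`, identity on `[3/8, 77/8]`,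
`10` for `t ≥ 79/8`. -/
noncomputable def smoothClamp (t : ℝ) : ℝ :=
  t * smoothTransition (4 * (t - 1/8)) * smoothTransition (4 * (79/8 - t))
    + 10 * (1 - smoothTransition (4 * (79/8 - t)))

lemma smoothClamp_contDiff : ContDiff ℝ ((⊤ : ℕ∞) : WithTop ℕ∞) smoothClamp := by
  unfold smoothClamp
  have h1 : ContDiff ℝ ((⊤ : ℕ∞) : WithTop ℕ∞) fun t : ℝ => 4 * (t - 1/8) :=
    contDiff_const.mul (contDiff_id.sub contDiff_const)
  have h2 : ContDiff ℝ ((⊤ : ℕ∞) : WithTop ℕ∞) fun t : ℝ => 4 * (79/8 - t) :=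
    contDiff_const.mul (contDiff_const.sub contDiff_id)
  exact ((contDiff_id.mul
      ((Real.smoothTransition.contDiff (n := ⊤)).comp h1)).mul
      ((Real.smoothTransition.contDiff (n := ⊤)).comp h2)).add
    (contDiff_const.mul (contDiff_const.sub
      ((Real.smoothTransition.contDiff (n := ⊤)).comp h2)))

lemma smoothClamp_eq_zero {t : ℝ} (ht : t ≤ 1/8) : smoothClamp t = 0 := by
  unfold smoothClamp
  rw [Real.smoothTransition.zero_of_nonpos (by linarith),
    Real.smoothTransition.one_of_one_le (by linarith)]
  ring

lemma smoothClamp_eq_ten {t : ℝ} (ht : 79/8 ≤ t) : smoothClamp t = 10 := by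
  unfold smoothClamp
  rw [Real.smoothTransition.zero_of_nonpos (x := 4 * (79/8 - t)) (by linarith)]
  ring

lemma smoothClamp_mem (t : ℝ) : smoothClamp t ∈ Set.Icc (0 : ℝ) 10 := by
  rcases le_or_gt t (1/8) with h | h
  · rw [smoothClamp_eq_zero h]; constructor <;> norm_num
  rcases le_or_gt (79/8) t with h' | h'
  · rw [smoothClamp_eq_ten h']; constructor <;> norm_num
  unfold smoothClamp
  set a := smoothTransition (4 * (t - 1/8)) with ha
  set b := smoothTransition (4 * (79/8 - t)) with hb
  have ha0 : 0 ≤ a := Real.smoothTransition.nonneg _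
  have ha1 : a ≤ 1 := Real.smoothTransition.le_one _
  have hb0 : 0 ≤ b := Real.smoothTransition.nonneg _
  have hb1 : b ≤ 1 := Real.smoothTransition.le_one _
  have ht0 : 0 ≤ t := by linarith
  have htab : t * a ≤ 10 := by nlinarith
  have h1 : t * a * b ≤ 10 * b := mul_le_mul_of_nonneg_right htab hb0
  have h2 : 0 ≤ t * a * b := mul_nonneg (mul_nonneg ht0 ha0) hb0
  constructor
  · nlinarith
  · nlinarith

lemma smoothClamp_close {t : ℝ} (h1 : -(1/8) ≤ t) (h2 : t ≤ 81/8) :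
    |t - smoothClamp t| ≤ 3/8 := by
  rcases le_or_gt t (1/8) with h | h
  · rw [smoothClamp_eq_zero h, sub_zero, abs_le]; constructor <;> linarith
  rcases le_or_gt (79/8) t with h' | h'
  · rw [smoothClamp_eq_ten h', abs_le]; constructor <;> linarith
  unfold smoothClamp
  set a := smoothTransition (4 * (t - 1/8)) with ha
  set b := smoothTransition (4 * (79/8 - t)) with hb
  have ha0 : 0 ≤ a := Real.smoothTransition.nonneg _
  have ha1 : a ≤ 1 := Real.smoothTransition.le_one _
  have hb0 : 0 ≤ b := Real.smoothTransition.nonneg _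
  have hb1 : b ≤ 1 := Real.smoothTransition.le_one _
  rcases le_or_gt (3/8) t with h3 | h3
  · have haa : a = 1 := Real.smoothTransition.one_of_one_le (by linarith)
    rcases le_or_gt t (77/8) with h4 | h4
    · have hbb : b = 1 := Real.smoothTransition.one_of_one_le (by linarith)
      have he : t * 1 * 1 + 10 * (1 - 1) = t := by ring
      rw [haa, hbb, he, sub_self, abs_zero]; norm_num
    · rw [haa, abs_le]; constructor <;> nlinarith
  · have hbb : b = 1 := Real.smoothTransition.one_of_one_le (by linarith)
    rw [hbb, abs_le]; constructor <;> nlinarith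

lemma smoothClamp_clamp (t : ℝ) : smoothClamp t = smoothClamp (max 0 (min t 10)) := by
  rcases le_or_gt t 0 with h | h
  · rw [min_eq_left (by linarith), max_eq_left (by linarith),
      smoothClamp_eq_zero (by linarith), smoothClamp_eq_zero (by norm_num)]
  rcases le_or_gt 10 t with h' | h'
  · rw [min_eq_right h', max_eq_right (by norm_num),
      smoothClamp_eq_ten (by linarith), smoothClamp_eq_ten (by norm_num)]
  · rw [min_eq_left h'.le, max_eq_right h.le]

/-- `smoothClamp` is Lipschitz with some constant. -/
lemma smoothClamp_lipschitz : ∃ K : ℝ, 0 ≤ K ∧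
    ∀ s t : ℝ, |smoothClamp s - smoothClamp t| ≤ K * |s - t| := by
  have hderiv : Continuous (deriv smoothClamp) :=
    smoothClamp_contDiff.continuous_deriv (by exact_mod_cast le_top)
  obtain ⟨K, hK⟩ := (isCompact_Icc (a := (0:ℝ)) (b := 10)).exists_bound_of_continuousOn
    hderiv.continuousOn
  refine ⟨max K 0, le_max_right _ _, fun s t => ?_⟩
  have hdiff : ∀ x ∈ Set.Icc (0:ℝ) 10, DifferentiableAt ℝ smoothClamp x := fun x _ =>
    (smoothClamp_contDiff.differentiable (by simp)).differentiableAt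
  have key : ∀ x ∈ Set.Icc (0:ℝ) 10, ∀ y ∈ Set.Icc (0:ℝ) 10,
      ‖smoothClamp y - smoothClamp x‖ ≤ max K 0 * ‖y - x‖ := fun x hx y hy =>
    Convex.norm_image_sub_le_of_norm_deriv_le hdiff
      (fun z hz => (hK z hz).trans (le_max_left _ _)) (convex_Icc _ _) hx hy
  set s' := max 0 (min s 10) with hs'
  set t' := max 0 (min t 10) with ht'
  have hs'mem : s' ∈ Set.Icc (0:ℝ) 10 := ⟨le_max_left _ _,
    max_le (by norm_num) (min_le_right _ _)⟩
  have ht'mem : t' ∈ Set.Icc (0:ℝ) 10 := ⟨le_max_left _ _,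
    max_le (by norm_num) (min_le_right _ _)⟩
  have hclamp : |s' - t'| ≤ |s - t| := by
    calc |s' - t'| = |max (min s 10) 0 - max (min t 10) 0| := by
            rw [hs', ht', max_comm 0 _, max_comm 0 _]
      _ ≤ |min s 10 - min t 10| := abs_max_sub_max_le_abs _ _ _
      _ ≤ max |s - t| |(10:ℝ) - 10| := abs_min_sub_min_le_max _ _ _ _
      _ = |s - t| := by simp
  calc |smoothClamp s - smoothClamp t| = |smoothClamp s' - smoothClamp t'| := by
        rw [smoothClamp_clamp s, smoothClamp_clamp t]
    _ ≤ max K 0 * |s' - t'| := by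
        have := key t' ht'mem s' hs'mem
        simpa [Real.norm_eq_abs] using this
    _ ≤ max K 0 * |s - t| := by
        exact mul_le_mul_of_nonneg_left hclamp (le_max_right _ _)

/-- If on a Banach space `X` every `1`-Lipschitz `g : X → [0,10]` admits a `C^p` smooth,
`C`-Lipschitz `1/8`-approximation, then there is `C₀ ≥ 1` such that every such `g`
admits a `C^p` smooth, `C₀`-Lipschitz `1/2`-approximation `h : X → [0,10]` which
vanishes where `g` vanishes and equals `10` where `g` equals `10`. -/
theorem approx_preserving_levels (X : Type*) [NormedAddCommGroup X] [NormedSpace ℝ X]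
    [CompleteSpace X] (p : ℕ∞) (hp : 1 ≤ p) (C : ℝ) (hC : 1 ≤ C)
    (H : ∀ g : X → ℝ, (∀ x y : X, |g x - g y| ≤ ‖x - y‖) →
      (∀ x, g x ∈ Set.Icc (0 : ℝ) 10) →
      ∃ φ : X → ℝ, ContDiff ℝ p φ ∧ (∀ x y : X, |φ x - φ y| ≤ C * ‖x - y‖) ∧
        ∀ x, |g x - φ x| ≤ 1 / 8) :
    ∃ C₀ : ℝ, 1 ≤ C₀ ∧
      ∀ g : X → ℝ, (∀ x y : X, |g x - g y| ≤ ‖x - y‖) →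
        (∀ x, g x ∈ Set.Icc (0 : ℝ) 10) →
        ∃ h : X → ℝ, ContDiff ℝ p h ∧ (∀ x y : X, |h x - h y| ≤ C₀ * ‖x - y‖) ∧
          (∀ x, h x ∈ Set.Icc (0 : ℝ) 10) ∧
          (∀ x, |g x - h x| ≤ 1 / 2) ∧
          (∀ x, g x = 0 → h x = 0) ∧
          (∀ x, g x = 10 → h x = 10) := by
  obtain ⟨K, hK0, hKlip⟩ := smoothClamp_lipschitz
  refine ⟨max 1 (K * C), le_max_left _ _, fun g hglip hgmem => ?_⟩
  obtain ⟨φ, hφsmooth, hφlip, hφapprox⟩ := H g hglip hgmem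
  have hφrange : ∀ x, -(1/8) ≤ φ x ∧ φ x ≤ 81/8 := fun x => by
    have h1 := (hgmem x).1
    have h2 := (hgmem x).2
    have h3 := abs_le.1 (hφapprox x)
    constructor <;> linarith
  refine ⟨fun x => smoothClamp (φ x), ?_, ?_, fun x => smoothClamp_mem _, ?_, ?_, ?_⟩
  · exact (smoothClamp_contDiff.of_le (by exact_mod_cast le_top)).comp hφsmooth
  · intro x y
    calc |smoothClamp (φ x) - smoothClamp (φ y)| ≤ K * |φ x - φ y| := hKlip _ _
      _ ≤ K * (C * ‖x - y‖) := mul_le_mul_of_nonneg_left (hφlip x y) hK0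
      _ = K * C * ‖x - y‖ := by ring
      _ ≤ max 1 (K * C) * ‖x - y‖ :=
          mul_le_mul_of_nonneg_right (le_max_right _ _) (norm_nonneg _)
  · intro x
    have h1 := hφapprox x
    have h2 := smoothClamp_close (hφrange x).1 (hφrange x).2
    calc |g x - smoothClamp (φ x)|
        = |(g x - φ x) + (φ x - smoothClamp (φ x))| := by ring_nf
      _ ≤ |g x - φ x| + |φ x - smoothClamp (φ x)| := abs_add_le _ _
      _ ≤ 1/8 + 3/8 := add_le_add h1 h2
      _ = 1/2 := by norm_num
  · intro x hx
    have := abs_le.1 (hφapprox x)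
    rw [hx] at this
    exact smoothClamp_eq_zero (by linarith [this.2])
  · intro x hx
    have := abs_le.1 (hφapprox x)
    rw [hx] at this
    exact smoothClamp_eq_ten (by linarith [this.1])
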